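/- Let G' be a directed graph on n vertices, let β ≥ 8 be an integer, and fix a consistent system of shortest paths on G' with path set Π. Then there exists a finite family (q_1, q_1*), …, (q_k, q_k*) such that: each q_i ∈ Π has at most ⌊β/4⌋ vertices; each q_i* is a subset of the vertices of q_i with |q_i*| ≥ β/8; the sets q_1*, …, q_k* are pairwise disjoint (hence k ≤ 8n/β); the union of the vertex sets of the paths q_1, …, q_k equals the union of the sets q_1*, …, q_k*; and every path π ∈ Π with at most ⌊β/4⌋ vertices has fewer than β/8 vertices outside the union of q_1*, …, q_k*. -/

import Mathlib

open scoped Classical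

/-- An edge of a directed graph on vertex set `Fin n`. -/
abbrev Edge (n : ℕ) := Fin n × Fin n

/-- `l` is a directed path in the graph with edge set `E`:
a sequence of distinct vertices, each consecutive pair joined by an edge. -/
def IsPathList {n : ℕ} (E : Set (Edge n)) (l : List (Fin n)) : Prop :=
  l.Nodup ∧ l.Chain' (fun a b => (a, b) ∈ E)

/-- `l` is a directed path from `u` to `v` in the graph with edge set `E`. -/
def IsPathFromTo {n : ℕ} (E : Set (Edge n)) (u v : Fin n) (l : List (Fin n)) : Prop :=
  IsPathList E l ∧ l.head? = some u ∧ l.getLast? = some v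

/-- `hdist E u v` is the minimum number of edges on a directed path from `u` to `v`
(`⊤` if no such path exists). -/
noncomputable def hdist {n : ℕ} (E : Set (Edge n)) (u v : Fin n) : ℕ∞ :=
  sInf {k : ℕ∞ | ∃ l : List (Fin n), IsPathFromTo E u v l ∧ (l.length : ℕ∞) = k + 1}

/-- `(u, v)` is in the transitive closure: `u ≠ v` and `v` is reachable from `u`. -/
def TCrel {n : ℕ} (E : Set (Edge n)) (u v : Fin n) : Prop :=
  u ≠ v ∧ ∃ l : List (Fin n), IsPathFromTo E u v l

/-- The transitive closure of the graph with edge set `E`, as a set of pairs. -/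
def TCset {n : ℕ} (E : Set (Edge n)) : Set (Edge n) := {p | TCrel E p.1 p.2}

/-- `H` is a shortcut set with hopbound `β` for the graph with edge set `E`. -/
def IsShortcutSet {n : ℕ} (E H : Set (Edge n)) (β : ℕ) : Prop :=
  H ⊆ TCset E ∧ ∀ p ∈ TCset E, hdist (E ∪ H) p.1 p.2 ≤ (β : ℕ∞)

/-- A "good" greedy family relative to an already-covered set `C`. -/
def GoodList {n : ℕ} (E' : Set (Edge n)) (β : ℕ) (sp : Fin n → Fin n → List (Fin n))
    (C : Finset (Fin n)) (L : List (List (Fin n) × Finset (Fin n))) : Prop :=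
  (∀ p ∈ L, ∃ s t, TCrel E' s t ∧ p.1 = sp s t) ∧
  (∀ p ∈ L, p.1.length ≤ β / 4) ∧
  (∀ p ∈ L, ∀ x ∈ p.2, x ∈ p.1) ∧
  (∀ p ∈ L, β ≤ 8 * p.2.card) ∧
  (∀ p ∈ L, Disjoint p.2 C) ∧
  L.Pairwise (fun p q => Disjoint p.2 q.2) ∧
  (∀ p ∈ L, ∀ x ∈ p.1, x ∈ C ∨ ∃ q ∈ L, x ∈ q.2) ∧
  (∀ s t : Fin n, TCrel E' s t → (sp s t).length ≤ β / 4 →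
    8 * ((sp s t).toFinset.filter (fun x => x ∉ C ∧ ∀ p ∈ L, x ∉ p.2)).card < β)

lemma goodList_exists {n : ℕ} (E' : Set (Edge n)) (β : ℕ) (hβ : 8 ≤ β)
    (sp : Fin n → Fin n → List (Fin n)) :
    ∀ S : Finset (Fin n), ∃ L, GoodList E' β sp Sᶜ L := by
  intro S
  induction S using Finset.strongInduction with
  | _ S IH =>
    by_cases h : ∃ s t, TCrel E' s t ∧ (sp s t).length ≤ β / 4 ∧
        β ≤ 8 * ((sp s t).toFinset \ Sᶜ).card
    · obtain ⟨s, t, hst, hlen, hcard⟩ := h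
      set D := (sp s t).toFinset \ Sᶜ with hD
      have hDne : D.Nonempty := by
        rw [← Finset.card_pos]; omega
      have hDS : D ⊆ S := by
        intro x hx
        rw [hD, Finset.mem_sdiff, Finset.mem_compl] at hx
        exact not_not.mp hx.2
      obtain ⟨L', hL'⟩ := IH (S \ D) (Finset.sdiff_ssubset hDS hDne)
      have hcompl : (S \ D)ᶜ = Sᶜ ∪ D := by
        ext x
        simp only [Finset.mem_compl, Finset.mem_sdiff, Finset.mem_union]
        tauto
      rw [hcompl] at hL'
      obtain ⟨h1, h2, h3, h4, h5, h6, h7, h8⟩ := hL'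
      refine ⟨(sp s t, D) :: L', ?_, ?_, ?_, ?_, ?_, ?_, ?_, ?_⟩
      · rintro p hp
        rcases List.mem_cons.mp hp with rfl | hp
        · exact ⟨s, t, hst, rfl⟩
        · exact h1 p hp
      · rintro p hp
        rcases List.mem_cons.mp hp with rfl | hp
        · exact hlen
        · exact h2 p hp
      · rintro p hp
        rcases List.mem_cons.mp hp with rfl | hp
        · intro x hx
          have := (Finset.mem_sdiff.mp hx).1
          exact List.mem_toFinset.mp this
        · exact h3 p hp
      · rintro p hp
        rcases List.mem_cons.mp hp with rfl | hp
        · exact hcard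
        · exact h4 p hp
      · rintro p hp
        rcases List.mem_cons.mp hp with rfl | hp
        · exact Finset.sdiff_disjoint
        · exact (h5 p hp).mono_right Finset.subset_union_left
      · refine List.Pairwise.cons ?_ h6
        intro p hp
        exact ((h5 p hp).mono_right Finset.subset_union_right).symm
      · rintro p hp x hx
        rcases List.mem_cons.mp hp with rfl | hp
        · by_cases hxC : x ∈ Sᶜ
          · exact Or.inl hxC
          · refine Or.inr ⟨(sp s t, D), List.mem_cons_self, ?_⟩
            rw [hD, Finset.mem_sdiff]
            exact ⟨List.mem_toFinset.mpr hx, hxC⟩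
        · rcases h7 p hp x hx with hC | ⟨q, hq, hxq⟩
          · rcases Finset.mem_union.mp hC with hC | hC
            · exact Or.inl hC
            · exact Or.inr ⟨(sp s t, D), List.mem_cons_self, hC⟩
          · exact Or.inr ⟨q, List.mem_cons_of_mem _ hq, hxq⟩
      · intro s' t' hst' hlen'
        refine lt_of_le_of_lt (Nat.mul_le_mul_left 8 (Finset.card_le_card ?_))
          (h8 s' t' hst' hlen')
        intro x hx
        rw [Finset.mem_filter] at hx ⊢
        obtain ⟨hx1, hx2, hx3⟩ := hx
        have hxD : x ∉ D := hx3 _ (List.mem_cons_self)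
        refine ⟨hx1, ?_, fun p hp => hx3 p (List.mem_cons_of_mem _ hp)⟩
        rw [Finset.mem_union]
        tauto
    · push_neg at h
      refine ⟨[], ?_, ?_, ?_, ?_, ?_, List.Pairwise.nil, ?_, ?_⟩ <;>
        try (intro p hp; exact absurd hp List.not_mem_nil)
      · intro s t hst hlen
        have := h s t hst hlen
        have heq : (sp s t).toFinset.filter
            (fun x => x ∉ Sᶜ ∧ ∀ p ∈ ([] : List (List (Fin n) × Finset (Fin n))), x ∉ p.2)
            = (sp s t).toFinset \ Sᶜ := by
          ext x
          simp [Finset.mem_sdiff]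
        rw [heq]
        omega

/-- **path covers.** Let `G'` be a directed graph on `n` vertices, `β ≥ 8`
an integer, and fix a consistent system of shortest paths `sp` (with path set `Π`). Then
there is a finite family `(q₁, q₁*), …, (q_k, q_k*)` such that: each `qᵢ ∈ Π` has at most
`⌊β/4⌋` vertices; each `qᵢ*` is a subset of the vertices of `qᵢ` with `|qᵢ*| ≥ β/8`; the
sets `qᵢ*` are pairwise disjoint (hence `k ≤ 8n/β`); the union of the vertex sets of the
`qᵢ` equals the union of the `qᵢ*`; and every path of `Π` with at most `⌊β/4⌋` vertices
has fewer than `β/8` vertices outside the union of the `qᵢ*`. -/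
theorem path_cover_exists :
    ∀ (n : ℕ) (E' : Set (Edge n)) (β : ℕ), 8 ≤ β →
      ∀ sp : Fin n → Fin n → List (Fin n),
        -- `sp s t` is a shortest `s`–`t` path for every `(s,t) ∈ TC(G')`
        (∀ s t : Fin n, TCrel E' s t → IsPathFromTo E' s t (sp s t) ∧
          ∀ l : List (Fin n), IsPathFromTo E' s t l → (sp s t).length ≤ l.length) →
        -- the system is consistent: if `u` occurs before `v` on `sp s t`, then
        -- `sp u v` equals the corresponding subpath of `sp s t`
        (∀ s t : Fin n, TCrel E' s t → ∀ i j : ℕ, i < j →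
          ∀ u v : Fin n, (sp s t)[i]? = some u → (sp s t)[j]? = some v →
            sp u v = ((sp s t).drop i).take (j - i + 1)) →
        ∃ (k : ℕ) (q : Fin k → List (Fin n)) (qs : Fin k → Set (Fin n)),
          (∀ i : Fin k, ∃ s t : Fin n, TCrel E' s t ∧ q i = sp s t) ∧
          (∀ i : Fin k, (q i).length ≤ β / 4) ∧
          (∀ i : Fin k, qs i ⊆ {x : Fin n | x ∈ q i}) ∧
          (∀ i : Fin k, ((qs i).ncard : ℝ) ≥ (β : ℝ) / 8) ∧
          (∀ i j : Fin k, i ≠ j → Disjoint (qs i) (qs j)) ∧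
          ((k : ℝ) ≤ 8 * n / β) ∧
          ({x : Fin n | ∃ i : Fin k, x ∈ q i} = {x : Fin n | ∃ i : Fin k, x ∈ qs i}) ∧
          (∀ s t : Fin n, TCrel E' s t → (sp s t).length ≤ β / 4 →
            ({x : Fin n | x ∈ sp s t ∧ ∀ i : Fin k, x ∉ qs i}.ncard : ℝ) <
              (β : ℝ) / 8) := by
  intro n E' β hβ sp hsp hcons
  obtain ⟨L, h1, h2, h3, h4, h5, h6, h7, h8⟩ := goodList_exists E' β hβ sp Finset.univ
  simp only [Finset.compl_univ] at h5 h7 h8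
  have hβpos : (0:ℝ) < (β:ℝ) := by positivity
  refine ⟨L.length, fun i => (L.get i).1, fun i => ↑(L.get i).2, ?_, ?_, ?_, ?_, ?_, ?_, ?_, ?_⟩
  · intro i; exact h1 _ (L.get_mem i)
  · intro i; exact h2 _ (L.get_mem i)
  · intro i x hx; exact h3 _ (L.get_mem i) x hx
  · intro i
    rw [Set.ncard_coe_finset]
    rw [ge_iff_le, div_le_iff₀ (by norm_num : (0:ℝ) < 8)]
    have hb : (β:ℝ) ≤ 8 * ((L.get i).2.card : ℝ) := by
      exact_mod_cast h4 _ (L.get_mem i)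
    linarith
  · intro i j hij
    have hpg := List.pairwise_iff_get.mp h6
    rcases lt_or_gt_of_ne hij with h | h
    · exact Finset.disjoint_coe.mpr (hpg i j h)
    · exact (Finset.disjoint_coe.mpr (hpg j i h)).symm
  · -- k ≤ 8n/β
    rw [le_div_iff₀ hβpos]
    have hdisj : ∀ i j : Fin L.length, i ≠ j → Disjoint (L.get i).2 (L.get j).2 := by
      intro i j hij
      have hpg := List.pairwise_iff_get.mp h6
      rcases lt_or_gt_of_ne hij with h | h
      · exact hpg i j h
      · exact (hpg j i h).symm
    have hcard : (Finset.univ.biUnion (fun i : Fin L.length => (L.get i).2)).card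
        = ∑ i : Fin L.length, (L.get i).2.card := by
      apply Finset.card_biUnion
      intro i _ j _ hij; exact hdisj i j hij
    have hle : ∑ i : Fin L.length, (L.get i).2.card ≤ n := by
      rw [← hcard]
      calc (Finset.univ.biUnion (fun i : Fin L.length => (L.get i).2)).card
          ≤ Fintype.card (Fin n) := Finset.card_le_univ _
        _ = n := Fintype.card_fin n
    have hlb : L.length * β ≤ 8 * n := by
      calc L.length * β = ∑ _i : Fin L.length, β := by
              rw [Finset.sum_const, Finset.card_univ, Fintype.card_fin, smul_eq_mul]
        _ ≤ ∑ i : Fin L.length, 8 * (L.get i).2.card :=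
              Finset.sum_le_sum (fun i _ => h4 _ (L.get_mem i))
        _ = 8 * ∑ i : Fin L.length, (L.get i).2.card := by rw [Finset.mul_sum]
        _ ≤ 8 * n := by omega
    calc ((L.length : ℝ)) * β = ((L.length * β : ℕ) : ℝ) := by push_cast; ring
      _ ≤ ((8 * n : ℕ) : ℝ) := by exact_mod_cast hlb
      _ = 8 * n := by push_cast; ring
  · ext x
    simp only [Set.mem_setOf_eq]
    constructor
    · rintro ⟨i, hx⟩
      rcases h7 _ (L.get_mem i) x hx with hC | ⟨p, hp, hxp⟩
      · simp at hC
      · obtain ⟨j, hj⟩ := List.mem_iff_get.mp hp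
        refine ⟨j, ?_⟩
        subst hj
        exact hxp
    · rintro ⟨i, hx⟩
      exact ⟨i, h3 _ (L.get_mem i) x hx⟩
  · intro s t hst hlen
    have hkey := h8 s t hst hlen
    have heq : {x : Fin n | x ∈ sp s t ∧ ∀ i : Fin L.length, x ∉ (↑(L.get i).2 : Set (Fin n))}
        = ↑((sp s t).toFinset.filter
            (fun x => x ∉ (∅ : Finset (Fin n)) ∧ ∀ p ∈ L, x ∉ p.2)) := by
      ext x
      simp only [Set.mem_setOf_eq, Finset.coe_filter, List.mem_toFinset,
        Finset.notMem_empty, not_false_iff, true_and]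
      constructor
      · rintro ⟨hx, hall⟩
        refine ⟨hx, fun p hp => ?_⟩
        obtain ⟨j, hj⟩ := List.mem_iff_get.mp hp
        rw [← hj]
        exact hall j
      · rintro ⟨hx, hall⟩
        exact ⟨hx, fun i => hall _ (L.get_mem i)⟩
    rw [heq, Set.ncard_coe_finset]
    rw [lt_div_iff₀ (by norm_num : (0:ℝ) < 8)]
    have hnat : ((sp s t).toFinset.filter
        (fun x => x ∉ (∅ : Finset (Fin n)) ∧ ∀ p ∈ L, x ∉ p.2)).card * 8 < β := by omega
    exact_mod_cast hnat
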